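/- Let n ≥ 1, let A ∈ Mat_n(ℂ) have minimal polynomial m(X) over ℂ, and let f ∈ ℂ[X] be a monic polynomial of degree d ≥ 1. Then there exists a matrix Ã ∈ Mat_{n+d}(ℂ) such that: (1) the minimal polynomial of Ã over ℂ equals m(X)·f(X); (2) the upper-left n×n block of Ã equals A; (3) the lower-left d×n block of Ã is zero and the lower-right d×d block of Ã is upper triangular. -/

import Mathlib

open Polynomial Matrix


private lemma pow_blocks {n d : ℕ} (A : Matrix (Fin n) (Fin n) ℂ)
    (C0 : Matrix (Fin n) (Fin d) ℂ) (B : Matrix (Fin d) (Fin d) ℂ) (k : ℕ) :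
    ∃ Q, (Matrix.fromBlocks A C0 0 B) ^ k = Matrix.fromBlocks (A ^ k) Q 0 (B ^ k) := by
  induction k with
  | zero => exact ⟨0, by simp [Matrix.fromBlocks_one]⟩
  | succ k ih =>
    obtain ⟨Q, hQ⟩ := ih
    refine ⟨A ^ k * C0 + Q * B, ?_⟩
    rw [pow_succ, hQ, pow_succ, pow_succ, Matrix.fromBlocks_multiply]
    simp

private lemma aeval_blocks {n d : ℕ} (A : Matrix (Fin n) (Fin n) ℂ)
    (C0 : Matrix (Fin n) (Fin d) ℂ) (B : Matrix (Fin d) (Fin d) ℂ) (p : Polynomial ℂ) :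
    ∃ Q, Polynomial.aeval (Matrix.fromBlocks A C0 0 B) p =
      Matrix.fromBlocks (Polynomial.aeval A p) Q 0 (Polynomial.aeval B p) := by
  induction p using Polynomial.induction_on' with
  | add p q hp hq =>
    obtain ⟨Q1, h1⟩ := hp
    obtain ⟨Q2, h2⟩ := hq
    exact ⟨Q1 + Q2, by rw [map_add, h1, h2, map_add, map_add, Matrix.fromBlocks_add, add_zero]⟩
  | monomial k a =>
    obtain ⟨Q, hQ⟩ := pow_blocks A C0 B k
    refine ⟨a • Q, ?_⟩
    rw [aeval_monomial, aeval_monomial, aeval_monomial, ← Algebra.smul_def, ← Algebra.smul_def,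
      ← Algebra.smul_def, hQ, Matrix.fromBlocks_smul, smul_zero]

private lemma sum_mulVec' {J ι : Type*} [Fintype J] [DecidableEq J] (s : Finset ι)
    (P : ι → Matrix J J ℂ) (x : J → ℂ) :
    (∑ i ∈ s, P i) *ᵥ x = ∑ i ∈ s, P i *ᵥ x := by
  classical
  induction s using Finset.induction with
  | empty => simp [Matrix.zero_mulVec]
  | insert _ _ h ih => rw [Finset.sum_insert h, Finset.sum_insert h, Matrix.add_mulVec, ih]

private lemma sum_single_smul {d : ℕ} (G : ℕ → Polynomial ℂ) (k0 : Fin d) (a : ℂ) :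
    ∑ i : Fin d, (Pi.single (M := fun _ => ℂ) k0 a) i • G (i : ℕ) = a • G (k0 : ℕ) := by
  rw [Finset.sum_eq_single k0]
  · rw [Pi.single_eq_same]
  · intro b _ hb
    rw [Pi.single_eq_of_ne hb, zero_smul]
  · intro h; exact absurd (Finset.mem_univ k0) h

private lemma span_monic (d : ℕ) (G : ℕ → Polynomial ℂ)
    (hG : ∀ k, k < d → (G k).Monic ∧ (G k).natDegree = k) :
    ∀ (N : ℕ) (r : Polynomial ℂ), r.natDegree ≤ N → r.natDegree < d →
      ∃ c : Fin d → ℂ, r = ∑ k : Fin d, c k • G (k : ℕ) := by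
  intro N
  induction N using Nat.strong_induction_on with
  | _ N ih =>
    intro r hrN hrd
    by_cases hr0 : r = 0
    · exact ⟨0, by simp [hr0]⟩
    obtain ⟨hmon, hdegG⟩ := hG r.natDegree hrd
    have hGne : G r.natDegree ≠ 0 := hmon.ne_zero
    have hdeq : r.degree = (C r.leadingCoeff * G r.natDegree).degree := by
      rw [degree_C_mul (leadingCoeff_ne_zero.mpr hr0), degree_eq_natDegree hr0,
        degree_eq_natDegree hGne, hdegG]
    have hlc : r.leadingCoeff = (C r.leadingCoeff * G r.natDegree).leadingCoeff := by
      rw [leadingCoeff_mul, leadingCoeff_C, hmon.leadingCoeff, mul_one]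
    by_cases h0 : r - C r.leadingCoeff * G r.natDegree = 0
    · refine ⟨Pi.single ⟨r.natDegree, hrd⟩ r.leadingCoeff, ?_⟩
      rw [sum_single_smul, smul_eq_C_mul]
      exact (sub_eq_zero.mp h0)
    · have hdlt : (r - C r.leadingCoeff * G r.natDegree).degree < r.degree :=
        degree_sub_lt hdeq hr0 hlc
      have hnlt : (r - C r.leadingCoeff * G r.natDegree).natDegree < r.natDegree :=
        natDegree_lt_natDegree h0 hdlt
      obtain ⟨c', hc'⟩ := ih (r - C r.leadingCoeff * G r.natDegree).natDegree
        (lt_of_lt_of_le hnlt hrN) _ le_rfl (hnlt.trans hrd)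
      refine ⟨c' + Pi.single ⟨r.natDegree, hrd⟩ r.leadingCoeff, ?_⟩
      have : r = (r - C r.leadingCoeff * G r.natDegree) + C r.leadingCoeff * G r.natDegree := by
        ring
      conv_lhs => rw [this, hc']
      have hs' : ∑ i : Fin d, C ((Pi.single (M := fun _ => ℂ) ⟨r.natDegree, hrd⟩ r.leadingCoeff) i) * G (i : ℕ)
          = C r.leadingCoeff * G r.natDegree := by
        simpa [smul_eq_C_mul] using sum_single_smul G ⟨r.natDegree, hrd⟩ r.leadingCoeff
      simp only [Pi.add_apply, add_smul, Finset.sum_add_distrib, smul_eq_C_mul, hs']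


-- existence of a vector whose annihilator is exactly the minimal polynomial
private lemma exists_ann_vector {n : ℕ} (hn : 1 ≤ n) (A : Matrix (Fin n) (Fin n) ℂ) :
    ∃ v : Fin n → ℂ, ∀ t : Polynomial ℂ,
      (Polynomial.aeval A t) *ᵥ v = 0 → minpoly ℂ A ∣ t := by
  classical
  haveI : Nonempty (Fin n) := ⟨⟨0, hn⟩⟩
  set m := minpoly ℂ A with hm
  have hAint : IsIntegral ℂ A := Algebra.IsIntegral.isIntegral A
  have hm_monic : m.Monic := minpoly.monic hAint
  have hm0 : m ≠ 0 := hm_monic.ne_zero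
  have hmA : Polynomial.aeval A m = 0 := minpoly.aeval ℂ A
  have hm_deg : 0 < m.natDegree := minpoly.natDegree_pos hAint
  -- kernels of (m / (X - lam))(A) are proper subspaces
  have hKer : ∀ lam : ℂ, lam ∈ m.roots →
      (LinearMap.ker (Matrix.mulVecLin (Polynomial.aeval A (m /ₘ (X - C lam))))
        : Subspace ℂ (Fin n → ℂ)) ≠ ⊤ := by
    intro lam hroot hcontra
    have hrt : m.IsRoot lam := (Polynomial.mem_roots'.mp hroot).2
    have hWeq : (X - C lam) * (m /ₘ (X - C lam)) = m :=
      mul_divByMonic_eq_iff_isRoot.mpr hrt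
    have hzero : Polynomial.aeval A (m /ₘ (X - C lam)) = 0 := by
      ext i j
      have hmem : (Pi.single (M := fun _ => ℂ) j 1) ∈
          LinearMap.ker (Matrix.mulVecLin (Polynomial.aeval A (m /ₘ (X - C lam)))) := by
        rw [hcontra]; exact Submodule.mem_top
      rw [LinearMap.mem_ker, Matrix.mulVecLin_apply, Matrix.mulVec_single] at hmem
      have := congrFun hmem i
      simpa using this
    have hdvd : m ∣ (m /ₘ (X - C lam)) := minpoly.dvd ℂ A hzero
    have hne : m /ₘ (X - C lam) ≠ 0 := by
      intro h0
      rw [h0, mul_zero] at hWeq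
      exact hm0 hWeq.symm
    have hle := Polynomial.natDegree_le_of_dvd hdvd hne
    have hdegw : (m /ₘ (X - C lam)).natDegree = m.natDegree - 1 := by
      rw [natDegree_divByMonic m (monic_X_sub_C lam), natDegree_X_sub_C]
    omega
  set s : Finset (Subspace ℂ (Fin n → ℂ)) :=
    m.roots.toFinset.image
      (fun lam => LinearMap.ker (Matrix.mulVecLin (Polynomial.aeval A (m /ₘ (X - C lam)))))
    with hs
  have htop : ⊤ ∉ s := by
    intro hmem
    rw [hs, Finset.mem_image] at hmem
    obtain ⟨lam, hlam, h⟩ := hmem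
    exact hKer lam (Multiset.mem_toFinset.mp hlam) h
  have hune := Subspace.biUnion_ne_univ_of_top_notMem htop
  rw [Set.ne_univ_iff_exists_notMem] at hune
  obtain ⟨v, hv⟩ := hune
  refine ⟨v, ?_⟩
  -- the annihilator ideal of v
  set I : Ideal (Polynomial ℂ) :=
    { carrier := {p | (Polynomial.aeval A p) *ᵥ v = 0}
      add_mem' := fun {p} {q} hp hq => by
        simp only [Set.mem_setOf_eq] at *
        rw [map_add, Matrix.add_mulVec, hp, hq, add_zero]
      zero_mem' := by simp only [Set.mem_setOf_eq, map_zero, Matrix.zero_mulVec]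
      smul_mem' := fun q p hp => by
        simp only [Set.mem_setOf_eq, smul_eq_mul] at *
        rw [_root_.map_mul, ← Matrix.mulVec_mulVec, hp, Matrix.mulVec_zero] } with hI
  intro t ht
  have htI : t ∈ I := ht
  have hmI : m ∈ I := by
    show (Polynomial.aeval A m) *ᵥ v = 0
    rw [hmA, Matrix.zero_mulVec]
  have hgt : Submodule.IsPrincipal.generator I ∣ t := (Submodule.IsPrincipal.mem_iff_generator_dvd I).mp htI
  have hgm : Submodule.IsPrincipal.generator I ∣ m := (Submodule.IsPrincipal.mem_iff_generator_dvd I).mp hmI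
  set g := Submodule.IsPrincipal.generator I with hgdef
  have hgI : g ∈ I := Submodule.IsPrincipal.generator_mem I
  suffices hmg : m ∣ g from hmg.trans hgt
  obtain ⟨s', hs'⟩ := hgm
  by_cases hu : IsUnit s'
  · exact (Associated.symm ⟨hu.unit, hs'.symm⟩).dvd
  exfalso
  have hs'0 : s' ≠ 0 := by
    rintro rfl
    rw [mul_zero] at hs'
    exact hm0 hs'
  have hsdeg : s'.degree ≠ 0 := fun h => hu (Polynomial.isUnit_iff_degree_eq_zero.mpr h)
  obtain ⟨lam, hlam⟩ := IsAlgClosed.exists_root s' hsdeg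
  have hrootm : m.IsRoot lam := by
    rw [hs']
    simp [Polynomial.IsRoot, Polynomial.eval_mul, hlam.eq_zero]
  have hlamroots : lam ∈ m.roots := Polynomial.mem_roots'.mpr ⟨hm0, hrootm⟩
  obtain ⟨u, hu'⟩ := (Polynomial.dvd_iff_isRoot (p := s') (a := lam)).mpr hlam
  have hW : (X - C lam) * (m /ₘ (X - C lam)) = m := mul_divByMonic_eq_iff_isRoot.mpr hrootm
  have hwgu : m /ₘ (X - C lam) = g * u := by
    apply mul_left_cancel₀ (Polynomial.X_sub_C_ne_zero lam)
    rw [hW, hs', hu']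
    ring
  have hker : (Polynomial.aeval A (m /ₘ (X - C lam))) *ᵥ v = 0 := by
    have hgv : (Polynomial.aeval A g) *ᵥ v = 0 := hgI
    rw [hwgu, mul_comm, _root_.map_mul, ← Matrix.mulVec_mulVec, hgv, Matrix.mulVec_zero]
  apply hv
  refine Set.mem_biUnion (show (LinearMap.ker (Matrix.mulVecLin
      (Polynomial.aeval A (m /ₘ (X - C lam)))) : Subspace ℂ (Fin n → ℂ)) ∈ s from ?_) ?_
  · rw [hs, Finset.mem_image]
    exact ⟨lam, Multiset.mem_toFinset.mpr hlamroots, rfl⟩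
  · rw [SetLike.mem_coe, LinearMap.mem_ker, Matrix.mulVecLin_apply]
    exact hker


theorem exists_extension_minpoly_mul (n : ℕ) (hn : 1 ≤ n)
    (A : Matrix (Fin n) (Fin n) ℂ) (d : ℕ) (hd : 1 ≤ d)
    (f : Polynomial ℂ) (hf : f.Monic) (hdeg : f.natDegree = d) :
    ∃ Atil : Matrix (Fin (n + d)) (Fin (n + d)) ℂ,
      minpoly ℂ Atil = minpoly ℂ A * f ∧
      (∀ i j : Fin n, Atil (Fin.castAdd d i) (Fin.castAdd d j) = A i j) ∧
      (∀ (i : Fin d) (j : Fin n), Atil (Fin.natAdd n i) (Fin.castAdd d j) = 0) ∧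
      (∀ i j : Fin d, (j : ℕ) < (i : ℕ) → Atil (Fin.natAdd n i) (Fin.natAdd n j) = 0) := by
  classical
  haveI : Nonempty (Fin n) := ⟨⟨0, hn⟩⟩
  haveI : Nonempty (Fin d) := ⟨⟨0, hd⟩⟩
  obtain ⟨v, hann⟩ := exists_ann_vector hn A
  set m := minpoly ℂ A with hm
  have hAint : IsIntegral ℂ A := Algebra.IsIntegral.isIntegral A
  have hm_monic : m.Monic := minpoly.monic hAint
  have hm_deg : 0 < m.natDegree := minpoly.natDegree_pos hAint
  have hmA : Polynomial.aeval A m = 0 := minpoly.aeval ℂ A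
  have hd0 : 0 < d := hd
  -- roots of f, as a function ℕ → ℂ
  have hsplits : f.Splits := IsAlgClosed.splits f
  have hcard : f.roots.card = d := by
    have h := hsplits.natDegree_eq_card_roots
    rw [hdeg] at h
    exact h.symm
  set l : List ℂ := f.roots.toList with hl
  have hllen : l.length = d := by rw [hl, Multiset.length_toList, hcard]
  set μ : ℕ → ℂ := fun t => l.getD t 0 with hμ
  have hfprod : f = ∏ t ∈ Finset.range d, (X - C (μ t)) := by
    have h1 : f = (f.roots.map fun a => X - C a).prod :=
      hsplits.eq_prod_roots_of_monic hf
    have h2 : f.roots = (l : Multiset ℂ) := by rw [hl, Multiset.coe_toList]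
    have h3 : ((l : Multiset ℂ).map fun a => X - C a).prod = (l.map fun a => X - C a).prod := by
      simp
    have h4 : (l.map fun a => X - C a).prod = ∏ i : Fin l.length, (X - C (μ (i : ℕ))) := by
      conv_lhs => rw [← List.ofFn_get l, List.map_ofFn, List.prod_ofFn]
      refine Finset.prod_congr rfl fun i _ => ?_
      have : l.get i = μ (i : ℕ) := by
        rw [hμ]
        exact (List.getD_eq_getElem l 0 i.isLt).symm
      rw [Function.comp_apply, this]
    rw [h1, h2, h3, h4, Fin.prod_univ_eq_prod_range (fun t => X - C (μ t)) l.length, hllen]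
  -- the matrices
  set B : Matrix (Fin d) (Fin d) ℂ :=
    Matrix.of (fun i j => if i = j then μ (i : ℕ) else if (i : ℕ) + 1 = (j : ℕ) then 1 else 0)
    with hB
  set C0 : Matrix (Fin n) (Fin d) ℂ :=
    Matrix.of (fun i j => if (j : ℕ) = 0 then v i else 0) with hC0
  set M : Matrix (Fin n ⊕ Fin d) (Fin n ⊕ Fin d) ℂ := Matrix.fromBlocks A C0 0 B with hM
  set E : Fin d → (Fin n ⊕ Fin d → ℂ) := fun j => Pi.single (Sum.inr j) 1 with hE
  have hEelim : ∀ j : Fin d, E j = Sum.elim (0 : Fin n → ℂ) (Pi.single j 1) := by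
    intro j
    funext i
    cases i with
    | inl a => simp [hE, Pi.single_apply]
    | inr b => simp [hE, Pi.single_apply]
  have hsub : ∀ (c : ℂ) (x : Fin n ⊕ Fin d → ℂ), (M - c • 1) *ᵥ x = M *ᵥ x - c • x := by
    intro c x
    rw [Matrix.sub_mulVec, Matrix.smul_mulVec, Matrix.one_mulVec]
  have haevX : ∀ (c : ℂ), Polynomial.aeval M (X - C c) = M - c • 1 := by
    intro c
    rw [map_sub, aeval_X, aeval_C, Algebra.algebraMap_eq_smul_one]
  -- single step of the telescope
  have hstep0 : (M - μ 0 • 1) *ᵥ E ⟨0, hd0⟩ = Sum.elim v 0 := by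
    rw [hsub]
    funext i
    cases i with
    | inl a => simp [hE, hM, hC0, Pi.single_apply]
    | inr b =>
      rcases eq_or_ne b ⟨0, hd0⟩ with hb | hb
      · subst hb; simp [hE, hM, hB, Pi.single_apply]
      · have hb' : (b : ℕ) ≠ 0 := fun h => hb (Fin.ext h)
        simp [hE, hM, hB, Pi.single_apply, hb, hb']
  have hstepS : ∀ (t : ℕ) (h : t + 1 < d),
      (M - μ (t + 1) • 1) *ᵥ E ⟨t + 1, h⟩ = E ⟨t, by omega⟩ := by
    intro t h
    rw [hsub]
    funext i
    cases i with
    | inl a => simp [hE, hM, hC0, Pi.single_apply]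
    | inr b =>
      rcases eq_or_ne b ⟨t + 1, h⟩ with hb | hb
      · subst hb
        have : ((⟨t + 1, h⟩ : Fin d) : ℕ) ≠ t := by simp
        simp [hE, hM, hB, Pi.single_apply]
      · rcases eq_or_ne b ⟨t, by omega⟩ with hb2 | hb2
        · subst hb2
          have h1 : (⟨t, by omega⟩ : Fin d) ≠ ⟨t + 1, h⟩ := by
            intro hh; simp [Fin.mk.injEq] at hh
          simp [hE, hM, hB, Pi.single_apply, h1, hb]
        · have h1 : (b : ℕ) + 1 ≠ t + 1 := by
            intro hh
            exact hb2 (Fin.ext (show (b : ℕ) = t by omega))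
          simp [hE, hM, hB, Pi.single_apply, hb, hb2, h1, show (b : ℕ) ≠ t by omega]
  -- telescoping
  have hC1 : ∀ (k j : ℕ) (hj : j < d), k ≤ j →
      (Polynomial.aeval M (∏ t ∈ Finset.Ico (j + 1 - k) (j + 1), (X - C (μ t)))) *ᵥ E ⟨j, hj⟩
        = E ⟨j - k, by omega⟩ := by
    intro k
    induction k with
    | zero =>
      intro j hj _
      simp
    | succ k ih =>
      intro j hj hk
      have h1 : j + 1 - (k + 1) < j + 1 := by omega
      rw [Finset.prod_eq_prod_Ico_succ_bot h1, _root_.map_mul, ← Matrix.mulVec_mulVec]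
      have h2 : j + 1 - (k + 1) + 1 = j + 1 - k := by omega
      rw [h2, ih j hj (by omega), haevX]
      have h4 : (⟨j - k, by omega⟩ : Fin d) = ⟨(j - (k + 1)) + 1, by omega⟩ :=
        Fin.ext (show j - k = (j - (k + 1)) + 1 by omega)
      rw [h4]
      have h5 : j + 1 - (k + 1) = (j - (k + 1)) + 1 := by omega
      rw [h5]
      exact hstepS (j - (k + 1)) (by omega)
  have hC2 : ∀ (j : ℕ) (hj : j < d),
      (Polynomial.aeval M (∏ t ∈ Finset.range (j + 1), (X - C (μ t)))) *ᵥ E ⟨j, hj⟩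
        = Sum.elim v 0 := by
    intro j hj
    rw [Finset.range_eq_Ico, Finset.prod_eq_prod_Ico_succ_bot (by omega : 0 < j + 1),
      _root_.map_mul, ← Matrix.mulVec_mulVec]
    have h2 : (0 : ℕ) + 1 = j + 1 - j := by omega
    rw [h2, hC1 j j hj le_rfl, haevX]
    have h4 : (⟨j - j, by omega⟩ : Fin d) = ⟨0, hd0⟩ := Fin.ext (show j - j = 0 by omega)
    rw [h4]
    exact hstep0
  -- block structure corollaries
  obtain ⟨Qm, hQm⟩ := aeval_blocks A C0 B m
  obtain ⟨Qf, hQf⟩ := aeval_blocks A C0 B f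
  rw [← hM] at hQm hQf
  have hfB : Polynomial.aeval B f = 0 := by
    ext i j
    have hsplit2 : f = (∏ t ∈ Finset.Ico ((j : ℕ) + 1) d, (X - C (μ t))) *
        (∏ t ∈ Finset.range ((j : ℕ) + 1), (X - C (μ t))) := by
      rw [hfprod, Finset.range_eq_Ico, mul_comm, Finset.range_eq_Ico,
        Finset.prod_Ico_consecutive _ (Nat.zero_le ((j : ℕ) + 1)) (by omega : (j : ℕ) + 1 ≤ d),
        ← Finset.range_eq_Ico]
    obtain ⟨Q2, hQ2⟩ := aeval_blocks A C0 B (∏ t ∈ Finset.Ico ((j : ℕ) + 1) d, (X - C (μ t)))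
    rw [← hM] at hQ2
    have hval : (Polynomial.aeval M f) *ᵥ E j
        = Sum.elim ((Polynomial.aeval A
            (∏ t ∈ Finset.Ico ((j : ℕ) + 1) d, (X - C (μ t)))) *ᵥ v) 0 := by
      conv_lhs => rw [hsplit2]
      rw [_root_.map_mul, ← Matrix.mulVec_mulVec]
      have h6 := hC2 (j : ℕ) j.isLt
      rw [show (⟨(j : ℕ), j.isLt⟩ : Fin d) = j from Fin.ext rfl] at h6
      rw [h6, hQ2, Matrix.fromBlocks_mulVec]
      funext i'
      cases i' with
      | inl a => simp
      | inr b => simp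
    have h2 := congrFun hval (Sum.inr i)
    rw [hQf] at h2
    have hcomp : (Pi.single (M := fun _ => ℂ) (Sum.inr j : Fin n ⊕ Fin d) 1) ∘ Sum.inr
        = Pi.single j 1 := by
      funext b
      simp [Pi.single_apply]
    simpa [hE, hcomp] using h2
  have hMmf : Polynomial.aeval M (m * f) = 0 := by
    rw [_root_.map_mul, hQm, hQf, hmA, hfB, Matrix.fromBlocks_multiply]
    simp
  -- the triangular basis polynomials
  set G : ℕ → Polynomial ℂ := fun k => ∏ t ∈ Finset.Ico (d - k) d, (X - C (μ t)) with hG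
  have hGprops : ∀ k, k < d → (G k).Monic ∧ (G k).natDegree = k := by
    intro k hk
    constructor
    · exact monic_prod_of_monic _ _ fun t _ => monic_X_sub_C (μ t)
    · rw [hG]
      simp only
      rw [Polynomial.natDegree_prod _ _ fun t _ => Polynomial.X_sub_C_ne_zero (μ t)]
      simp only [Polynomial.natDegree_X_sub_C, Finset.sum_const, Nat.card_Ico, smul_eq_mul,
        mul_one]
      omega
  have hGE : ∀ k, k < d →
      (Polynomial.aeval M (G k)) *ᵥ E ⟨d - 1, by omega⟩ = E ⟨d - 1 - k, by omega⟩ := by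
    intro k hk
    have h7 := hC1 k (d - 1) (by omega) (by omega)
    rw [show d - 1 + 1 = d from by omega] at h7
    exact h7
  have hfE : (Polynomial.aeval M f) *ᵥ E ⟨d - 1, by omega⟩ = Sum.elim v 0 := by
    have h7 := hC2 (d - 1) (by omega)
    rw [show d - 1 + 1 = d from by omega] at h7
    rw [show Polynomial.aeval M f
        = Polynomial.aeval M (∏ t ∈ Finset.range d, (X - C (μ t))) from by rw [← hfprod]]
    exact h7
  -- minimality
  have hmf_monic : (m * f).Monic := hm_monic.mul hf
  have hmin : ∀ r : Polynomial ℂ,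
      (Polynomial.aeval M r) *ᵥ E ⟨d - 1, by omega⟩ = 0 → m * f ∣ r := by
    intro r hr
    rw [← Polynomial.modByMonic_eq_zero_iff_dvd hmf_monic]
    set r' := r %ₘ (m * f) with hr'def
    have hr'v : (Polynomial.aeval M r') *ᵥ E ⟨d - 1, by omega⟩ = 0 := by
      have hdecomp := Polynomial.modByMonic_add_div r (m * f)
      have h8 : Polynomial.aeval M r = Polynomial.aeval M r'
          + Polynomial.aeval M (m * f) * Polynomial.aeval M (r /ₘ (m * f)) := by
        rw [← _root_.map_mul, ← map_add, hdecomp]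
      rw [h8, hMmf, zero_mul, add_zero] at hr
      exact hr
    by_contra hne
    set t' := r' /ₘ f with ht'def
    set r'' := r' %ₘ f with hr''def
    have hdec2 : r'' + f * t' = r' := Polynomial.modByMonic_add_div r' f
    have hfne1 : f ≠ 1 := by
      intro h1
      rw [h1, Polynomial.natDegree_one] at hdeg
      omega
    have hr''d : r''.natDegree < d := by
      have hh := Polynomial.natDegree_modByMonic_lt r' hf hfne1
      rw [← hr''def] at hh
      omega
    obtain ⟨c, hc⟩ := span_monic d G hGprops r''.natDegree r'' le_rfl hr''d
    have hsum : (Polynomial.aeval M r'') *ᵥ E ⟨d - 1, by omega⟩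
        = ∑ k : Fin d, c k • E ⟨d - 1 - (k : ℕ), by omega⟩ := by
      rw [hc, map_sum, sum_mulVec']
      refine Finset.sum_congr rfl fun k _ => ?_
      rw [_root_.map_smul, Matrix.smul_mulVec, hGE (k : ℕ) k.isLt]
    have ht'E : (Polynomial.aeval M (f * t')) *ᵥ E ⟨d - 1, by omega⟩
        = Sum.elim ((Polynomial.aeval A t') *ᵥ v) 0 := by
      rw [mul_comm, _root_.map_mul, ← Matrix.mulVec_mulVec, hfE]
      obtain ⟨Qt, hQt⟩ := aeval_blocks A C0 B t'
      rw [← hM] at hQt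
      rw [hQt, Matrix.fromBlocks_mulVec]
      funext i'
      cases i' with
      | inl a => simp
      | inr b => simp
    have htotal : Sum.elim ((Polynomial.aeval A t') *ᵥ v) 0
        + ∑ k : Fin d, c k • E ⟨d - 1 - (k : ℕ), by omega⟩ = 0 := by
      rw [← ht'E, ← hsum, ← Matrix.add_mulVec, ← map_add, add_comm (f * t') r'', hdec2]
      exact hr'v
    have hczero : ∀ k0 : Fin d, c k0 = 0 := by
      intro k0
      have h := congrFun htotal (Sum.inr ⟨d - 1 - (k0 : ℕ), by omega⟩)
      rw [Pi.add_apply, Finset.sum_apply] at h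
      have hz : ∀ k : Fin d, k ∈ Finset.univ → k ≠ k0 →
          (c k • E ⟨d - 1 - (k : ℕ), by omega⟩) (Sum.inr ⟨d - 1 - (k0 : ℕ), by omega⟩) = 0 := by
        intro k _ hk
        have hkk0 : d - 1 - (k0 : ℕ) ≠ d - 1 - (k : ℕ) := by
          intro hh
          apply hk
          apply Fin.ext
          have hk1 := k.isLt
          have hk2 := k0.isLt
          omega
        simp only [Pi.smul_apply, hE]
        rw [Pi.single_eq_of_ne (by simp only [ne_eq, Sum.inr.injEq, Fin.mk.injEq]; omega)]
        simp
      rw [Finset.sum_eq_single k0 hz (fun hk0 => absurd (Finset.mem_univ k0) hk0)] at h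
      simp only [Pi.smul_apply, hE, Pi.single_eq_same] at h
      simpa using h
    have ht'v : (Polynomial.aeval A t') *ᵥ v = 0 := by
      funext a
      have h := congrFun htotal (Sum.inl a)
      rw [Pi.add_apply, Finset.sum_apply] at h
      simp only [Sum.elim_inl, Pi.smul_apply, hE] at h
      simp only [Pi.single_apply] at h
      simpa using h
    have hmdvd : m ∣ t' := hann t' ht'v
    have ht'0 : t' = 0 := by
      by_contra ht'ne
      have h1 := Polynomial.natDegree_le_of_dvd hmdvd ht'ne
      have h2 : t'.natDegree = r'.natDegree - f.natDegree :=
        Polynomial.natDegree_divByMonic r' hf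
      have h3 : r'.natDegree < m.natDegree + d := by
        have hlt := Polynomial.degree_modByMonic_lt r hmf_monic
        have h4 : (m * f).natDegree = m.natDegree + d := by
          rw [hm_monic.natDegree_mul hf, hdeg]
        have h5 := Polynomial.natDegree_lt_natDegree hne hlt
        omega
      omega
    have hr''0 : r'' = 0 := by
      rw [hc]
      simp [hczero]
    have hfinal : r' = 0 := by
      rw [← hdec2, hr''0, ht'0, mul_zero, add_zero]
    exact hne hfinal
  -- conclusion
  have hMint : IsIntegral ℂ M := Algebra.IsIntegral.isIntegral M
  have h1 : minpoly ℂ M ∣ m * f := minpoly.dvd ℂ M hMmf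
  have h2 : m * f ∣ minpoly ℂ M := by
    apply hmin
    rw [minpoly.aeval, Matrix.zero_mulVec]
  have hminM : minpoly ℂ M = m * f :=
    Polynomial.eq_of_monic_of_associated (minpoly.monic hMint) hmf_monic
      (associated_of_dvd_dvd h1 h2)
  refine ⟨(Matrix.reindexAlgEquiv ℂ ℂ finSumFinEquiv) M, ?_, ?_, ?_, ?_⟩
  · rw [minpoly.algEquiv_eq, hminM]
  · intro i j
    simp [Matrix.reindexAlgEquiv_apply, Matrix.reindex_apply, hM]
  · intro i j
    simp [Matrix.reindexAlgEquiv_apply, Matrix.reindex_apply, hM]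
  · intro i j hij
    simp only [Matrix.reindexAlgEquiv_apply, Matrix.reindex_apply, Matrix.submatrix_apply,
      finSumFinEquiv_symm_apply_natAdd, hM, Matrix.fromBlocks_apply₂₂, Matrix.of_apply, hB]
    have h1 : ¬ (i = j) := fun h => by subst h; omega
    have h2 : ¬ ((i : ℕ) + 1 = (j : ℕ)) := by omega
    rw [if_neg h1, if_neg h2]
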